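/- Let f, g : ℂ → ℂ and let a, b : ℕ → ℂ be sequences such that for every z with |z| < 1 the series ∑_{n=0}^∞ a_n z^n converges to f(z) and ∑_{n=0}^∞ b_n z^n converges to g(z) (so f and g are holomorphic on the unit disc). Then for every z with |z| < 1 and every r₀ with |z| < r₀ < 1, the series ∑_{n=0}^∞ (∑_{k=0}^n a_k) · b_n · z^n converges, and its sum equals (1/(2πi)) ∮_{|w|=r₀} f(w)/(w(1−w)) · g(z/w) dw, where the integral is the counterclockwise circle integral over the circle of radius r₀ centered at 0. -/

import Mathlib

open scoped BigOperators
set_option maxHeartbeats 1000000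



lemma rhaly_coeff_bdd (a : ℕ → ℂ) (f : ℂ → ℂ)
    (hf : ∀ z : ℂ, ‖z‖ < 1 → HasSum (fun n : ℕ => a n * z ^ n) (f z))
    (ρ : ℝ) (h0 : 0 ≤ ρ) (h1 : ρ < 1) :
    ∃ C : ℝ, 0 ≤ C ∧ ∀ n, ‖a n‖ * ρ ^ n ≤ C := by
  have h : ‖(ρ : ℂ)‖ < 1 := by rwa [Complex.norm_real, Real.norm_eq_abs, abs_of_nonneg h0]
  have hs := (hf ρ h).summable
  have ht : Filter.Tendsto (fun n => ‖a n * (ρ : ℂ) ^ n‖) Filter.atTop (nhds 0) := by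
    simpa using hs.tendsto_atTop_zero.norm
  obtain ⟨C, hC⟩ := ht.bddAbove_range
  refine ⟨C, le_trans (norm_nonneg _) (hC (Set.mem_range_self 0)), fun n => ?_⟩
  have h2 := hC (Set.mem_range_self n)
  simpa [norm_mul, norm_pow, Complex.norm_real, abs_of_nonneg h0] using h2

lemma rhaly_summable_aux {a : ℕ → ℂ} {C ρ r : ℝ} (hC : ∀ n, ‖a n‖ * ρ ^ n ≤ C)
    (hρ : 0 < ρ) (hr0 : 0 ≤ r) (hr : r < ρ) :
    Summable (fun n => ‖a n‖ * r ^ n) := by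
  have hq : r / ρ < 1 := (div_lt_one hρ).2 hr
  have hq0 : 0 ≤ r / ρ := div_nonneg hr0 hρ.le
  refine Summable.of_nonneg_of_le (fun n => by positivity)
    (fun n => ?_) ((summable_geometric_of_lt_one hq0 hq).mul_left C)
  have : ‖a n‖ * r ^ n = (‖a n‖ * ρ ^ n) * (r / ρ) ^ n := by
    rw [div_pow]; field_simp
  rw [this]
  exact mul_le_mul_of_nonneg_right (hC n) (by positivity)

lemma rhaly_key (f g : ℂ → ℂ) (a b : ℕ → ℂ)
    (hf : ∀ z : ℂ, ‖z‖ < 1 → HasSum (fun n : ℕ => a n * z ^ n) (f z))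
    (hg : ∀ z : ℂ, ‖z‖ < 1 → HasSum (fun n : ℕ => b n * z ^ n) (g z))
    (z : ℂ) (r₀ : ℝ) (hr0 : 0 < r₀) (hzr : ‖z‖ < r₀) (hr₁ : r₀ < 1)
    (SA : Summable (fun n => ‖∑ k ∈ Finset.range (n + 1), a k‖ * r₀ ^ n))
    (SB : Summable (fun m => ‖b m‖ * (‖z‖ ^ m / r₀ ^ m)))
    (Sa : Summable (fun n => ‖a n‖ * r₀ ^ n))
    (w : ℂ) (hw : ‖w‖ = r₀) :
    HasSum (fun p : ℕ × ℕ =>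
      ((∑ k ∈ Finset.range (p.1 + 1), a k) * w ^ p.1) * (b p.2 * z ^ p.2 * w⁻¹ ^ p.2) * w⁻¹)
      (f w / (w * (1 - w)) * g (z / w)) := by
  have hw1 : ‖w‖ < 1 := by rw [hw]; exact hr₁
  have hwn : ‖w‖ = r₀ := by exact hw
  have hwn1 : ‖w‖ < 1 := by rw [hwn]; exact hr₁
  have hna : Summable fun n => ‖a n * w ^ n‖ := by
    simpa [norm_mul, norm_pow, hwn] using Sa
  have hgeo : Summable fun n : ℕ => ‖w ^ n‖ := by
    simpa [norm_pow] using summable_geometric_of_lt_one (norm_nonneg w) hwn1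
  have hmain := hasSum_sum_range_mul_of_summable_norm hna hgeo
  rw [(hf w hw1).tsum_eq, tsum_geometric_of_norm_lt_one hwn1] at hmain
  have hrw : ∀ n : ℕ, ∑ k ∈ Finset.range (n + 1), a k * w ^ k * w ^ (n - k)
      = (∑ k ∈ Finset.range (n + 1), a k) * w ^ n := by
    intro n
    rw [Finset.sum_mul]
    refine Finset.sum_congr rfl fun k hk => ?_
    rw [mul_assoc, ← pow_add, Nat.add_sub_cancel' (Nat.lt_succ_iff.mp (Finset.mem_range.mp hk))]
  simp only [hrw] at hmain
  have hzw : ‖z / w‖ < 1 := by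
    rw [norm_div, hw]; exact (div_lt_one hr0).2 hzr
  have h2 : HasSum (fun m => b m * z ^ m * w⁻¹ ^ m) (g (z / w)) := by
    have := hg (z / w) hzw
    simpa [div_eq_mul_inv, mul_pow, mul_assoc] using this
  have hA' : Summable fun n => ‖(∑ k ∈ Finset.range (n + 1), a k) * w ^ n‖ := by
    simpa [norm_mul, norm_pow, hwn] using SA
  have hB' : Summable fun m => ‖b m * z ^ m * w⁻¹ ^ m‖ := by
    refine SB.congr fun m => ?_
    simp [norm_mul, norm_pow, norm_inv, hwn, inv_pow, div_eq_mul_inv,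
      mul_assoc]
  have hprod := summable_mul_of_summable_norm hA' hB'
  have hfin := (hmain.mul h2 hprod).mul_right w⁻¹
  have hval : f w * (1 - w)⁻¹ * g (z / w) * w⁻¹ = f w / (w * (1 - w)) * g (z / w) := by
    simp only [div_eq_mul_inv, mul_inv]; ring
  rw [hval] at hfin
  exact hfin

lemma rhaly_term_integral (cA cB : ℂ) (n m : ℕ) (r₀ : ℝ) (hr0 : 0 < r₀) :
    (∫ θ in (0:ℝ)..(2 * Real.pi), (circleMap 0 r₀ θ * Complex.I) *
      ((cA * circleMap 0 r₀ θ ^ n) * (cB * (circleMap 0 r₀ θ)⁻¹ ^ m) * (circleMap 0 r₀ θ)⁻¹))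
      = if n = m then (2 * (Real.pi : ℂ) * Complex.I) * (cA * cB) else 0 := by
  have h1 : (∫ θ in (0:ℝ)..(2 * Real.pi), (circleMap 0 r₀ θ * Complex.I) *
      ((cA * circleMap 0 r₀ θ ^ n) * (cB * (circleMap 0 r₀ θ)⁻¹ ^ m) * (circleMap 0 r₀ θ)⁻¹))
      = ∮ w in C(0, r₀), (cA * cB) * (w - 0) ^ ((n : ℤ) - m - 1) := by
    rw [circleIntegral]
    refine (intervalIntegral.integral_congr fun θ _ => ?_).symm
    have hne : circleMap 0 r₀ θ ≠ 0 := fun h => hr0.ne' (circleMap_eq_center_iff.mp h)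
    rw [deriv_circleMap, smul_eq_mul]
    congr 1
    rw [sub_zero, show ((n : ℤ) - m - 1) = (n : ℤ) + (-(m : ℤ) + -1) by ring,
      zpow_add₀ hne, zpow_add₀ hne, zpow_natCast, zpow_neg, zpow_natCast, zpow_neg, zpow_one,
      inv_pow]
    ring
  rw [h1, circleIntegral.integral_const_mul]
  by_cases h : n = m
  · subst h
    rw [show ((n : ℤ) - n - 1) = -1 by ring, if_pos rfl]
    simp only [zpow_neg_one]
    rw [circleIntegral.integral_sub_inv_of_mem_ball (Metric.mem_ball_self hr0)]
    ring
  · have hne : ((n : ℤ) - m - 1) ≠ -1 := by omega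
    rw [circleIntegral.integral_sub_zpow_of_ne hne, mul_zero, if_neg h]


theorem rhaly_integral_representation_disc
    (f g : ℂ → ℂ) (a b : ℕ → ℂ)
    (hf : ∀ z : ℂ, ‖z‖ < 1 → HasSum (fun n : ℕ => a n * z ^ n) (f z))
    (hg : ∀ z : ℂ, ‖z‖ < 1 → HasSum (fun n : ℕ => b n * z ^ n) (g z))
    (z : ℂ) (hz : ‖z‖ < 1)
    (r₀ : ℝ) (hzr : ‖z‖ < r₀) (hr₁ : r₀ < 1) :
    HasSum (fun n : ℕ => (∑ k ∈ Finset.range (n + 1), a k) * b n * z ^ n)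
      ((2 * (Real.pi : ℂ) * Complex.I)⁻¹ *
        ∮ w in C(0, r₀), f w / (w * (1 - w)) * g (z / w)) := by
  have habz : 0 ≤ ‖z‖ := norm_nonneg z
  have hr0 : 0 < r₀ := lt_of_le_of_lt habz hzr
  obtain ⟨ρa, hρa0, hρa1, hra⟩ : ∃ ρ : ℝ, 0 < ρ ∧ ρ < 1 ∧ r₀ < ρ :=
    ⟨(r₀ + 1) / 2, by positivity, by linarith, by linarith⟩
  have hzr' : ‖z‖ / r₀ < 1 := (div_lt_one hr0).2 hzr
  have hdiv0 : 0 ≤ ‖z‖ / r₀ := div_nonneg habz hr0.le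
  obtain ⟨ρb, hρb0, hρb1, hrb⟩ : ∃ ρ : ℝ, 0 < ρ ∧ ρ < 1 ∧ ‖z‖ / r₀ < ρ :=
    ⟨(‖z‖ / r₀ + 1) / 2, by linarith, by linarith, by linarith⟩
  obtain ⟨Ca, hCa0, hCa⟩ := rhaly_coeff_bdd a f hf ρa hρa0.le hρa1
  obtain ⟨Cb, hCb0, hCb⟩ := rhaly_coeff_bdd b g hg ρb hρb0.le hρb1
  have Sa : Summable (fun n => ‖a n‖ * r₀ ^ n) := rhaly_summable_aux hCa hρa0 hr0.le hra
  have SB : Summable (fun m => ‖b m‖ * (‖z‖ ^ m / r₀ ^ m)) := by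
    refine (rhaly_summable_aux hCb hρb0 hdiv0 hrb).congr fun m => ?_
    rw [div_pow]
  have SA : Summable (fun n => ‖∑ k ∈ Finset.range (n + 1), a k‖ * r₀ ^ n) := by
    set q : ℝ := r₀ / ρa with hqdef
    have hq0 : 0 ≤ q := div_nonneg hr0.le hρa0.le
    have hq1 : q < 1 := (div_lt_one hρa0).2 hra
    have s1 : Summable fun n : ℕ => (n : ℝ) ^ 1 * q ^ n :=
      summable_pow_mul_geometric_of_norm_lt_one 1
        (by rw [Real.norm_eq_abs, abs_of_nonneg hq0]; exact hq1)
    have s3 := (s1.add (summable_geometric_of_lt_one hq0 hq1)).mul_left Ca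
    refine Summable.of_nonneg_of_le (fun n => by positivity) (fun n => ?_) s3
    have hAn : ‖∑ k ∈ Finset.range (n + 1), a k‖ ≤ ((n : ℝ) + 1) * (Ca / ρa ^ n) := by
      calc ‖∑ k ∈ Finset.range (n + 1), a k‖ ≤ ∑ k ∈ Finset.range (n + 1), ‖a k‖ :=
            norm_sum_le _ _
        _ ≤ ∑ _k ∈ Finset.range (n + 1), Ca / ρa ^ n := by
            refine Finset.sum_le_sum fun k hk => ?_
            have hk' : k ≤ n := Nat.lt_succ_iff.mp (Finset.mem_range.mp hk)
            have h1 : ‖a k‖ ≤ Ca / ρa ^ k := (le_div_iff₀ (by positivity)).2 (hCa k)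
            refine h1.trans ?_
            exact div_le_div_of_nonneg_left hCa0 (pow_pos hρa0 n)
              (pow_le_pow_of_le_one hρa0.le hρa1.le hk')
        _ = ((n : ℝ) + 1) * (Ca / ρa ^ n) := by
            rw [Finset.sum_const, Finset.card_range, nsmul_eq_mul]
            push_cast; ring
    calc ‖∑ k ∈ Finset.range (n + 1), a k‖ * r₀ ^ n
        ≤ (((n : ℝ) + 1) * (Ca / ρa ^ n)) * r₀ ^ n :=
          mul_le_mul_of_nonneg_right hAn (by positivity)
      _ = Ca * ((n : ℝ) ^ 1 * q ^ n + q ^ n) := by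
          have hne : ρa ^ n ≠ 0 := (pow_pos hρa0 n).ne'
          rw [hqdef, div_pow]
          field_simp
  -- the integrand family
  set F : ℕ × ℕ → ℝ → ℂ := fun p θ => (circleMap 0 r₀ θ * Complex.I) *
    (((∑ k ∈ Finset.range (p.1 + 1), a k) * circleMap 0 r₀ θ ^ p.1) *
      (b p.2 * z ^ p.2 * (circleMap 0 r₀ θ)⁻¹ ^ p.2) * (circleMap 0 r₀ θ)⁻¹) with hFdef
  set limF : ℝ → ℂ := fun θ => (circleMap 0 r₀ θ * Complex.I) *
    (f (circleMap 0 r₀ θ) / (circleMap 0 r₀ θ * (1 - circleMap 0 r₀ θ)) *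
      g (z / circleMap 0 r₀ θ)) with hlimFdef
  have hcont : Continuous (circleMap 0 r₀) := continuous_circleMap 0 r₀
  have hne : ∀ θ, circleMap 0 r₀ θ ≠ 0 := fun θ h => hr0.ne' (circleMap_eq_center_iff.mp h)
  have hcontinv : Continuous fun θ => (circleMap 0 r₀ θ)⁻¹ := hcont.inv₀ hne
  have habs : ∀ θ, ‖circleMap 0 r₀ θ‖ = r₀ := fun θ => by
    rw [norm_circleMap_zero, abs_of_pos hr0]
  set bound : ℕ × ℕ → ℝ → ℝ := fun p _ =>
    (‖∑ k ∈ Finset.range (p.1 + 1), a k‖ * r₀ ^ p.1) *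
      (‖b p.2‖ * (‖z‖ ^ p.2 / r₀ ^ p.2)) with hbdef
  have hFmeas : ∀ p : ℕ × ℕ, MeasureTheory.AEStronglyMeasurable (F p)
      (MeasureTheory.volume.restrict (Set.uIoc (0 : ℝ) (2 * Real.pi))) := by
    intro p
    refine Continuous.aestronglyMeasurable ?_
    exact (hcont.mul continuous_const).mul
      (((continuous_const.mul (hcont.pow p.1)).mul
        (continuous_const.mul (hcontinv.pow p.2))).mul hcontinv)
  have h_bound : ∀ p : ℕ × ℕ, ∀ᵐ θ ∂MeasureTheory.volume,
      θ ∈ Set.uIoc (0 : ℝ) (2 * Real.pi) → ‖F p θ‖ ≤ bound p θ := by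
    intro p
    refine Filter.Eventually.of_forall fun θ _ => le_of_eq ?_
    simp only [hFdef, hbdef, norm_mul, norm_pow, norm_inv, Complex.norm_I,
      habs θ]
    field_simp
    rw [mul_assoc, ← mul_pow, one_div, inv_mul_cancel₀ hr0.ne', one_pow, mul_one]
  have bound_summable : ∀ᵐ θ ∂MeasureTheory.volume,
      θ ∈ Set.uIoc (0 : ℝ) (2 * Real.pi) → Summable fun p => bound p θ :=
    Filter.Eventually.of_forall fun θ _ =>
      SA.mul_of_nonneg SB (fun n => by positivity) (fun m => by positivity)
  have bound_integrable : IntervalIntegrable (fun θ => ∑' p, bound p θ)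
      MeasureTheory.volume 0 (2 * Real.pi) := by
    have heq : (fun θ : ℝ => ∑' p, bound p θ) = fun _ : ℝ => ∑' p : ℕ × ℕ,
        (‖∑ k ∈ Finset.range (p.1 + 1), a k‖ * r₀ ^ p.1) *
          (‖b p.2‖ * (‖z‖ ^ p.2 / r₀ ^ p.2)) := by
      funext θ
      simp only [hbdef]
    rw [heq]
    exact intervalIntegrable_const
  have h_lim : ∀ᵐ θ ∂MeasureTheory.volume,
      θ ∈ Set.uIoc (0 : ℝ) (2 * Real.pi) → HasSum (fun p => F p θ) (limF θ) :=
    Filter.Eventually.of_forall fun θ _ =>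
      (rhaly_key f g a b hf hg z r₀ hr0 hzr hr₁ SA SB Sa (circleMap 0 r₀ θ)
        (habs θ)).mul_left (circleMap 0 r₀ θ * Complex.I)
  have hDCT := intervalIntegral.hasSum_integral_of_dominated_convergence
    (μ := MeasureTheory.volume) (a := 0) (b := 2 * Real.pi) (F := F) (f := limF)
    bound hFmeas h_bound bound_summable bound_integrable h_lim
  have hIeq : (∫ θ in (0:ℝ)..(2 * Real.pi), limF θ)
      = ∮ w in C(0, r₀), f w / (w * (1 - w)) * g (z / w) := by
    rw [circleIntegral]
    refine (intervalIntegral.integral_congr fun θ _ => ?_).symm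
    rw [deriv_circleMap, smul_eq_mul]
  rw [hIeq] at hDCT
  have hterm : ∀ p : ℕ × ℕ, (∫ θ in (0:ℝ)..(2 * Real.pi), F p θ)
      = if p.1 = p.2 then (2 * (Real.pi : ℂ) * Complex.I) *
          ((∑ k ∈ Finset.range (p.1 + 1), a k) * (b p.2 * z ^ p.2)) else 0 := fun p =>
    rhaly_term_integral _ _ p.1 p.2 r₀ hr0
  simp only [hterm] at hDCT
  have hinj : Function.Injective (fun n : ℕ => ((n, n) : ℕ × ℕ)) := fun x y h =>
    congrArg Prod.fst h
  have hvan : ∀ p : ℕ × ℕ, p ∉ Set.range (fun n : ℕ => ((n, n) : ℕ × ℕ)) →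
      (if p.1 = p.2 then (2 * (Real.pi : ℂ) * Complex.I) *
          ((∑ k ∈ Finset.range (p.1 + 1), a k) * (b p.2 * z ^ p.2)) else 0) = 0 := by
    rintro ⟨p1, p2⟩ hp
    rw [if_neg]
    intro h
    exact hp ⟨p1, by simp_all⟩
  have hfinal := (Function.Injective.hasSum_iff hinj hvan).mpr hDCT
  have hfinal' : HasSum (fun n : ℕ => (2 * (Real.pi : ℂ) * Complex.I) *
      ((∑ k ∈ Finset.range (n + 1), a k) * (b n * z ^ n)))
      (∮ w in C(0, r₀), f w / (w * (1 - w)) * g (z / w)) := by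
    convert hfinal using 1
    funext n
    simp [Function.comp]
  have h2pi : (2 * (Real.pi : ℂ) * Complex.I) ≠ 0 := by
    simp [Real.pi_ne_zero, Complex.I_ne_zero, Complex.ofReal_ne_zero]
  have hres := hfinal'.mul_left (2 * (Real.pi : ℂ) * Complex.I)⁻¹
  simp only [inv_mul_cancel_left₀ h2pi] at hres
  simpa only [mul_assoc] using hres
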